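/- Let (Ω,ρ) be a compact path-connected metric space with diameter π. Then for each δ ∈ (0,π) there exists a finite set Λ = {a_1, …, a_M} ⊂ Ω with M > 1 such that Ω is covered by the open balls B_δ(a_j), j = 1,…,M, and for each j = 2,…,M the distance from a_j to the set {a_1,…,a_{j-1}} equals exactly δ. -/

import Mathlib

open Metric Set

/-- Auxiliary predicate: each point after the first is at `infDist` exactly `δ`
from the set of earlier points. -/
def GoodFam {Ω : Type*} [MetricSpace Ω] (δ : ℝ) {n : ℕ} (a : Fin n → Ω) : Prop :=
  ∀ j : Fin n, 0 < (j : ℕ) →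
    Metric.infDist (a j) {x | ∃ i : Fin n, (i : ℕ) < (j : ℕ) ∧ a i = x} = δ

lemma goodFam_sep {Ω : Type*} [MetricSpace Ω] {δ : ℝ} {n : ℕ} {a : Fin n → Ω}
    (ha : GoodFam δ a) {i j : Fin n} (hij : (i : ℕ) < (j : ℕ)) :
    δ ≤ dist (a j) (a i) := by
  have hj : 0 < (j : ℕ) := Nat.pos_of_ne_zero (by omega)
  have hmem : a i ∈ {x | ∃ k : Fin n, (k : ℕ) < (j : ℕ) ∧ a k = x} := ⟨i, hij, rfl⟩
  have h := Metric.infDist_le_dist_of_mem (x := a j) hmem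
  rw [ha j hj] at h
  exact h

lemma goodFam_snoc {Ω : Type*} [MetricSpace Ω] {δ : ℝ} {n : ℕ} {a : Fin (n + 1) → Ω}
    (ha : GoodFam δ a) {w : Ω} (hw : Metric.infDist w (Set.range a) = δ) :
    GoodFam δ (fun i : Fin (n + 2) => if h : (i : ℕ) < n + 1 then a ⟨i, h⟩ else w) := by
  intro j hj
  set b : Fin (n + 2) → Ω :=
    fun i : Fin (n + 2) => if h : (i : ℕ) < n + 1 then a ⟨i, h⟩ else w with hb
  by_cases h : (j : ℕ) < n + 1
  · have hbj : b j = a ⟨j, h⟩ := by simp [hb, h, Nat.lt_add_one_iff.mp h]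
    have hset : {x | ∃ i : Fin (n + 2), (i : ℕ) < (j : ℕ) ∧ b i = x}
        = {x | ∃ i : Fin (n + 1), (i : ℕ) < (j : ℕ) ∧ a i = x} := by
      ext p
      constructor
      · rintro ⟨i, hij, rfl⟩
        have hi : (i : ℕ) < n + 1 := lt_trans hij h
        exact ⟨⟨i, hi⟩, hij, by simp [hb, hi, Nat.lt_add_one_iff.mp hi]⟩
      · rintro ⟨i, hij, rfl⟩
        have hi : (i : ℕ) < n + 2 := lt_trans i.isLt (by omega)
        exact ⟨⟨(i : ℕ), hi⟩, hij, by simp [hb, i.isLt, Nat.lt_add_one_iff.mp i.isLt]⟩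
    rw [hbj, hset]
    exact ha ⟨j, h⟩ hj
  · have hjn : (j : ℕ) = n + 1 := by omega
    have hbj : b j = w := by simp [hb, hjn]
    have hset : {x | ∃ i : Fin (n + 2), (i : ℕ) < (j : ℕ) ∧ b i = x} = Set.range a := by
      ext p
      constructor
      · rintro ⟨i, hij, rfl⟩
        have hi : (i : ℕ) < n + 1 := by omega
        exact ⟨⟨i, hi⟩, by simp [hb, hi, Nat.lt_add_one_iff.mp hi]⟩
      · rintro ⟨k, rfl⟩
        have hk : (k : ℕ) < n + 2 := lt_trans k.isLt (by omega)
        exact ⟨⟨(k : ℕ), hk⟩, by simpa [hjn] using k.isLt, by simp [hb, k.isLt, Nat.lt_add_one_iff.mp k.isLt]⟩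
    rw [hbj, hset]
    exact hw

theorem stmt_5 (Ω : Type*) [MetricSpace Ω] [CompactSpace Ω] [PathConnectedSpace Ω]
    (hdiam : Metric.diam (Set.univ : Set Ω) = Real.pi)
    (δ : ℝ) (hδ : δ ∈ Set.Ioo 0 Real.pi) :
    ∃ (M : ℕ), 1 < M ∧ ∃ a : Fin M → Ω,
      (⋃ j, Metric.ball (a j) δ) = Set.univ ∧
      ∀ j : Fin M, 0 < (j : ℕ) →
        Metric.infDist (a j) {x | ∃ i : Fin M, (i : ℕ) < (j : ℕ) ∧ a i = x} = δ := by
  obtain ⟨δpos, δlt⟩ := hδ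
  -- two far-apart points
  obtain ⟨x, y, hxy⟩ : ∃ x y : Ω, δ < dist x y := by
    by_contra h
    push_neg at h
    have : Metric.diam (Set.univ : Set Ω) ≤ δ :=
      Metric.diam_le_of_forall_dist_le δpos.le (fun x _ y _ => h x y)
    rw [hdiam] at this
    linarith
  -- IVT step
  have ivt : ∀ (S : Set Ω) (x0 z : Ω), x0 ∈ S → δ ≤ Metric.infDist z S →
      ∃ w : Ω, Metric.infDist w S = δ := by
    intro S x0 z hx0 hz
    set γ := PathConnectedSpace.somePath x0 z
    have hc : Continuous fun t : ℝ => Metric.infDist (γ.extend t) S :=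
      (continuous_infDist_pt S).comp γ.continuous_extend
    have hmem : δ ∈ Set.Icc (Metric.infDist (γ.extend 0) S) (Metric.infDist (γ.extend 1) S) := by
      rw [γ.extend_zero, γ.extend_one, Metric.infDist_zero_of_mem hx0]
      exact ⟨δpos.le, hz⟩
    obtain ⟨t, _, ht⟩ := intermediate_value_Icc (by norm_num : (0:ℝ) ≤ 1) hc.continuousOn hmem
    exact ⟨γ.extend t, ht⟩
  -- the set of achievable lengths (shifted by one)
  set A : Set ℕ := {n | ∃ a : Fin (n + 1) → Ω, GoodFam δ a} with hA
  have h0 : 0 ∈ A := ⟨fun _ => x, fun j hj => absurd hj (by omega)⟩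
  -- extension step
  have ext : ∀ n : ℕ, ∀ a : Fin (n + 1) → Ω, GoodFam δ a →
      (∃ z : Ω, ∀ i, δ ≤ dist z (a i)) → n + 1 ∈ A := by
    rintro n a ha ⟨z, hz⟩
    have hcomp : IsCompact (Set.range a) := (Set.finite_range a).isCompact
    obtain ⟨p, hpS, hpd⟩ := hcomp.exists_infDist_eq_dist (Set.range_nonempty a) z
    have hS : δ ≤ Metric.infDist z (Set.range a) := by
      rw [hpd]
      obtain ⟨i, rfl⟩ := hpS
      exact hz i
    obtain ⟨w, hw⟩ := ivt (Set.range a) (a 0) z ⟨0, rfl⟩ hS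
    exact ⟨_, goodFam_snoc ha hw⟩
  -- boundedness of A
  obtain ⟨t, htf, htc⟩ := Metric.totallyBounded_iff.1 (isCompact_univ : IsCompact (Set.univ : Set Ω)).totallyBounded
    (δ / 2) (half_pos δpos)
  haveI := htf.to_subtype
  have hbdd : BddAbove A := by
    refine ⟨Nat.card t, fun n hn => ?_⟩
    obtain ⟨a, ha⟩ := hn
    have hch : ∀ i : Fin (n + 1), ∃ c ∈ t, a i ∈ Metric.ball c (δ / 2) := by
      intro i
      have := htc (Set.mem_univ (a i))
      simpa using this
    choose c hct hcb using hch
    have hinj : Function.Injective fun i : Fin (n + 1) => (⟨c i, hct i⟩ : t) := by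
      intro i j hij
      simp only [Subtype.mk.injEq] at hij
      by_contra hne
      have hsep : δ ≤ dist (a i) (a j) := by
        rcases lt_or_gt_of_ne (fun h : (i : ℕ) = (j : ℕ) => hne (Fin.ext h)) with h | h
        · rw [dist_comm]; exact goodFam_sep ha h
        · exact goodFam_sep ha h
      have h1 : dist (a i) (c i) < δ / 2 := Metric.mem_ball.1 (hcb i)
      have h2 : dist (a j) (c j) < δ / 2 := Metric.mem_ball.1 (hcb j)
      rw [← hij] at h2
      have := dist_triangle (a i) (c i) (a j)
      rw [dist_comm (c i) (a j)] at this
      linarith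
    have hcard := Nat.card_le_card_of_injective _ hinj
    simp only [Nat.card_eq_fintype_card, Fintype.card_fin] at hcard
    exact (Nat.le_succ n).trans hcard
  -- take the maximum
  have hAne : A.Nonempty := ⟨0, h0⟩
  set m := sSup A with hm
  obtain ⟨a, ha⟩ : m ∈ A := Nat.sSup_mem hAne hbdd
  -- m ≥ 1 since we can always extend the singleton family
  have h1 : 1 ∈ A := by
    refine ext 0 (fun _ => x) (fun j hj => absurd hj (by omega)) ⟨y, fun i => ?_⟩
    rw [dist_comm]
    exact hxy.le
  have hm1 : 1 ≤ m := le_csSup hbdd h1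
  refine ⟨m + 1, by omega, a, ?_, ha⟩
  -- covering
  by_contra hcov
  obtain ⟨z, hz⟩ : ∃ z : Ω, ∀ i, δ ≤ dist z (a i) := by
    have : ∃ z : Ω, z ∉ ⋃ j, Metric.ball (a j) δ := by
      by_contra h
      push_neg at h
      exact hcov (Set.eq_univ_of_forall h)
    obtain ⟨z, hz⟩ := this
    refine ⟨z, fun i => ?_⟩
    by_contra hlt
    exact hz (Set.mem_iUnion.2 ⟨i, Metric.mem_ball.2 (by linarith)⟩)
  have : m + 1 ∈ A := ext m a ha ⟨z, hz⟩
  have := le_csSup hbdd this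
  omega
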